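/- Let z be a real random variable whose distribution is atomless (a continuous random variable). Then the function F(x) = E(|z + x| − |z|) is differentiable at every x ∈ ℝ with derivative F′(x) = 1 − 2·P(z ≤ −x). -/

import Mathlib

open MeasureTheory
open scoped ENNReal NNReal

/-- **Derivative of the expected absolute deviation (Lemma 4).**
For a continuous (atomless) real random variable `z`, the function
`F(x) = E(|z + x| - |z|)` is differentiable with `F'(x) = 1 - 2 P(z ≤ -x)`. -/
theorem deriv_expected_abs_dev
    {Ω : Type*} [MeasurableSpace Ω] (μ : Measure Ω) [IsProbabilityMeasure μ]
    (z : Ω → ℝ) (hz : Measurable z)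
    (hatom : ∀ x : ℝ, μ {ω | z ω = x} = 0)
    (x : ℝ) :
    HasDerivAt (fun t : ℝ => ∫ ω, (|z ω + t| - |z ω|) ∂μ)
      (1 - 2 * (μ {ω | z ω ≤ -x}).toReal) x := by
  set F : ℝ → Ω → ℝ := fun t ω => |z ω + t| - |z ω| with hF
  set F' : Ω → ℝ := fun ω => if -x < z ω then 1 else -1 with hF'
  have hFmeas : ∀ t : ℝ, AEStronglyMeasurable (F t) μ := fun t =>
    (((hz.add_const t).abs.sub hz.abs)).aestronglyMeasurable
  have hF'meas : AEStronglyMeasurable F' μ := by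
    apply Measurable.aestronglyMeasurable
    exact Measurable.ite (measurableSet_lt measurable_const hz) measurable_const measurable_const
  have hFint : Integrable (F x) μ := by
    apply (integrable_const |x|).mono' (hFmeas x)
    filter_upwards with ω
    have := abs_abs_sub_abs_le_abs_sub (z ω + x) (z ω)
    simpa using this
  have hlip : ∀ᵐ ω ∂μ, LipschitzOnWith (Real.nnabs 1) (fun t => F t ω) (Metric.ball x 1) := by
    filter_upwards with ω
    apply LipschitzWith.lipschitzOnWith
    intro s t
    simp only [hF, edist_dist, Real.dist_eq]
    rw [show (Real.nnabs 1 : ℝ≥0∞) = 1 by simp, one_mul]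
    apply ENNReal.ofReal_le_ofReal
    calc |(|z ω + s| - |z ω|) - (|z ω + t| - |z ω|)|
        = abs (abs (z ω + s) - abs (z ω + t)) := by ring_nf
      _ ≤ abs ((z ω + s) - (z ω + t)) := abs_abs_sub_abs_le_abs_sub _ _
      _ = |s - t| := by ring_nf
  have hdiff : ∀ᵐ ω ∂μ, HasDerivAt (fun t => F t ω) (F' ω) x := by
    have hne : ∀ᵐ ω ∂μ, z ω ≠ -x := by
      have := hatom (-x)
      rw [ae_iff]
      simpa using this
    filter_upwards [hne] with ω hω
    have h1 : HasDerivAt (fun t : ℝ => z ω + t) 1 x := by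
      simpa using (hasDerivAt_id x).const_add (z ω)
    have habs : HasDerivAt (fun t : ℝ => |z ω + t|) (F' ω) x := by
      have h0 : z ω + x ≠ 0 := fun h => hω (by linarith)
      have := (hasDerivAt_abs h0).comp x h1
      convert this using 1
      any_goals rfl
      simp only [hF', mul_one]
      rcases lt_or_gt_of_ne h0 with h | h
      · rw [if_neg (by push_neg; linarith), sign_neg h]
        simp
      · rw [if_pos (by linarith), sign_pos h]
        simp
    simpa [hF] using habs.sub_const |z ω|
  have key := hasDerivAt_integral_of_dominated_loc_of_lip (F := F) (F' := F')
    (bound := fun _ => (1 : ℝ)) (Metric.ball_mem_nhds x one_pos)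
    (Filter.Eventually.of_forall hFmeas) hFint hF'meas hlip (integrable_const 1) hdiff
  have hval : ∫ ω, F' ω ∂μ = 1 - 2 * (μ {ω | z ω ≤ -x}).toReal := by
    have hs : MeasurableSet {ω | -x < z ω} := measurableSet_lt measurable_const hz
    have heq : F' = fun ω => 2 * Set.indicator {ω | -x < z ω} (fun _ => (1:ℝ)) ω - 1 := by
      funext ω
      by_cases h : -x < z ω
      · simp [hF', Set.indicator_apply, Set.mem_setOf_eq, h]; norm_num
      · simp [hF', Set.indicator_apply, Set.mem_setOf_eq, h]
    rw [heq]
    have hind : Integrable (Set.indicator {ω | -x < z ω} (fun _ => (1:ℝ))) μ :=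
      (integrable_const (1:ℝ)).indicator hs
    rw [integral_sub ((hind.const_mul 2)) (integrable_const 1), integral_const_mul,
      integral_indicator_const _ hs]
    have hcompl : {ω | -x < z ω} = {ω | z ω ≤ -x}ᶜ := by
      ext ω; simp [not_le]
    rw [hcompl, measureReal_def, measure_compl (measurableSet_le hz measurable_const) (measure_ne_top μ _),
      measure_univ]
    have hle : μ {ω | z ω ≤ -x} ≤ 1 := prob_le_one
    rw [ENNReal.toReal_sub_of_le hle ENNReal.one_ne_top]
    simp [smul_eq_mul]
    ring
  rw [← hval]
  exact key.2
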